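/- (Folding Lemma) Let a_1, …, a_r be positive integers with a_r ≥ 2, let t/q = [a_1, …, a_r] = 1/(a_1 + 1/(a_2 + ⋯ + 1/a_r)) be the value of this continued fraction written in lowest terms, and let b ≥ 2 be an integer. Then t/q + (−1)^r/(b·q^2) equals the value of the continued fraction [a_1, …, a_r, b − 1, 1, a_r − 1, a_{r−1}, …, a_1]. -/

import Mathlib

open Matrix

/-- The value of the finite simple continued fraction `1/(a₁ + 1/(a₂ + ⋯ + 1/aᵣ))`. -/
def cfVal : List ℕ → ℚ
  | [] => 0
  | a :: l => 1 / (a + cfVal l)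

/-- The 2×2 matrix associated to a continued fraction list. -/
def cfMat : List ℕ → Matrix (Fin 2) (Fin 2) ℤ
  | [] => 1
  | a :: l => !![0, 1; 1, (a : ℤ)] * cfMat l

lemma cfMat_append (L₁ L₂ : List ℕ) : cfMat (L₁ ++ L₂) = cfMat L₁ * cfMat L₂ := by
  induction L₁ with
  | nil => simp [cfMat]
  | cons a l ih => simp [cfMat, ih, Matrix.mul_assoc]

lemma cfMat_nonneg (L : List ℕ) : ∀ i j, 0 ≤ cfMat L i j := by
  induction L with
  | nil =>
    intro i j; fin_cases i <;> fin_cases j <;> simp [cfMat]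
  | cons a l ih =>
    have ha : (0:ℤ) ≤ (a:ℤ) := by positivity
    intro i j
    fin_cases i <;> fin_cases j <;>
      simp [cfMat, Matrix.mul_apply, Fin.sum_univ_two] <;>
      nlinarith [ih 0 0, ih 0 1, ih 1 0, ih 1 1]

lemma cfMat_pos11 (L : List ℕ) (hL : ∀ x ∈ L, 0 < x) : 1 ≤ cfMat L 1 1 := by
  induction L with
  | nil => simp [cfMat]
  | cons a l ih =>
    have hl : ∀ x ∈ l, 0 < x := fun x hx => hL x (List.mem_cons_of_mem _ hx)
    have ha : (1:ℤ) ≤ (a:ℤ) := by exact_mod_cast hL a (List.mem_cons_self)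
    have hB : (0:ℤ) ≤ cfMat l 0 1 := cfMat_nonneg l 0 1
    have hD : (1:ℤ) ≤ cfMat l 1 1 := ih hl
    simp only [cfMat, Matrix.mul_apply, Fin.sum_univ_two]
    norm_num
    nlinarith

lemma cfVal_eq (L : List ℕ) (hL : ∀ x ∈ L, 0 < x) :
    cfVal L = (cfMat L 0 1 : ℚ) / (cfMat L 1 1 : ℚ) := by
  induction L with
  | nil => simp [cfVal, cfMat]
  | cons a l ih =>
    have hl : ∀ x ∈ l, 0 < x := fun x hx => hL x (List.mem_cons_of_mem _ hx)
    have ha : 1 ≤ a := hL a (List.mem_cons_self)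
    have hB : (0:ℤ) ≤ cfMat l 0 1 := cfMat_nonneg l 0 1
    have hD : (1:ℤ) ≤ cfMat l 1 1 := cfMat_pos11 l hl
    have hBQ : (0:ℚ) ≤ (cfMat l 0 1 : ℚ) := by exact_mod_cast hB
    have hDQ : (1:ℚ) ≤ (cfMat l 1 1 : ℚ) := by exact_mod_cast hD
    have haQ : (1:ℚ) ≤ (a:ℚ) := by exact_mod_cast ha
    rw [show cfVal (a :: l) = 1 / (a + cfVal l) from rfl, ih hl]
    have h01 : cfMat (a :: l) 0 1 = cfMat l 1 1 := by
      simp [cfMat, Matrix.mul_apply, Fin.sum_univ_two]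
    have h11 : cfMat (a :: l) 1 1 = cfMat l 0 1 + a * cfMat l 1 1 := by
      simp [cfMat, Matrix.mul_apply, Fin.sum_univ_two]
    rw [h01, h11]
    have hd : (0:ℚ) < (cfMat l 0 1 : ℚ) + (a:ℚ) * (cfMat l 1 1 : ℚ) := by nlinarith
    have hq : (0:ℚ) ≤ (cfMat l 0 1 : ℚ) / (cfMat l 1 1 : ℚ) :=
      div_nonneg hBQ (by linarith)
    rw [div_eq_div_iff (by linarith) (by push_cast; nlinarith)]
    push_cast
    field_simp
    ring

lemma cfMat_reverse (L : List ℕ) : cfMat L.reverse = (cfMat L)ᵀ := by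
  induction L with
  | nil => simp [cfMat]
  | cons a l ih =>
    have hsymm : (!![0, 1; 1, (a : ℤ)])ᵀ = !![0, 1; 1, (a : ℤ)] := by
      ext i j; fin_cases i <;> fin_cases j <;> simp
    rw [List.reverse_cons, cfMat_append, ih]
    show _ = (!![0, 1; 1, (a : ℤ)] * cfMat l)ᵀ
    rw [Matrix.transpose_mul, hsymm]
    congr 1
    simp [cfMat]

lemma cfMat_det (L : List ℕ) : (cfMat L).det = (-1) ^ L.length := by
  induction L with
  | nil => simp [cfMat]
  | cons a l ih =>
    rw [show cfMat (a :: l) = !![0, 1; 1, (a : ℤ)] * cfMat l from rfl,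
      Matrix.det_mul, ih]
    simp [Matrix.det_fin_two_of, pow_succ]

theorem folding_lemma (M : List ℕ) (a b : ℕ) (hM : ∀ x ∈ M, 0 < x)
    (ha : 2 ≤ a) (hb : 2 ≤ b) :
    cfVal (M ++ [a]) + (-1) ^ (M.length + 1) / ((b : ℚ) * ((cfVal (M ++ [a])).den : ℚ) ^ 2) =
      cfVal (M ++ [a, b - 1, 1, a - 1] ++ M.reverse) := by
  set n := M.length with hn
  set x00 := cfMat M 0 0 with hx00
  set x01 := cfMat M 0 1 with hx01
  set x10 := cfMat M 1 0 with hx10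
  set x11 := cfMat M 1 1 with hx11
  -- positivity of the lists
  have hMa : ∀ x ∈ M ++ [a], 0 < x := by
    intro x hx
    rcases List.mem_append.mp hx with h | h
    · exact hM x h
    · simp at h; omega
  have hfullpos : ∀ x ∈ M ++ [a, b - 1, 1, a - 1] ++ M.reverse, 0 < x := by
    intro x hx
    rcases List.mem_append.mp hx with h | h
    · rcases List.mem_append.mp h with h' | h'
      · exact hM x h'
      · simp at h'; omega
    · exact hM x (List.mem_reverse.mp h)
  -- determinant of X
  have hdet : x00 * x11 - x01 * x10 = (-1) ^ n := by
    have := cfMat_det M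
    rwa [Matrix.det_fin_two] at this
  -- entries of cfMat (M ++ [a])
  have hKa : cfMat [a] = !![0, 1; 1, (a : ℤ)] := by
    simp [cfMat]
  have hMA : cfMat (M ++ [a]) = cfMat M * !![0, 1; 1, (a : ℤ)] := by
    rw [cfMat_append, hKa]
  have hB : cfMat (M ++ [a]) 0 1 = x00 + a * x01 := by
    rw [hMA]; simp [Matrix.mul_apply, Fin.sum_univ_two]; ring
  have hD : cfMat (M ++ [a]) 1 1 = x10 + a * x11 := by
    rw [hMA]; simp [Matrix.mul_apply, Fin.sum_univ_two]; ring
  have hDpos : 0 < x10 + a * x11 := by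
    have := cfMat_pos11 (M ++ [a]) hMa
    rw [hD] at this; omega
  -- the middle matrix
  have hcast_a : ((a - 1 : ℕ) : ℤ) = (a : ℤ) - 1 := by
    have : 1 ≤ a := by omega
    push_cast [this]; ring
  have hcast_b : ((b - 1 : ℕ) : ℤ) = (b : ℤ) - 1 := by
    have : 1 ≤ b := by omega
    push_cast [this]; ring
  have hC : cfMat [a, b - 1, 1, a - 1] =
      !![(b : ℤ), a * b - 1; a * b + 1, a ^ 2 * b] := by
    show !![0, 1; 1, (a : ℤ)] * (!![0, 1; 1, ((b - 1 : ℕ) : ℤ)] *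
      (!![0, 1; 1, (1 : ℤ)] * (!![0, 1; 1, ((a - 1 : ℕ) : ℤ)] * 1))) = _
    rw [hcast_a, hcast_b]
    ext i j
    fin_cases i <;> fin_cases j <;>
      simp [Matrix.mul_apply, Fin.sum_univ_two] <;> ring
  -- matrix of the full list
  have hfullmat : cfMat (M ++ [a, b - 1, 1, a - 1] ++ M.reverse) =
      cfMat M * (!![(b : ℤ), a * b - 1; a * b + 1, a ^ 2 * b] * (cfMat M)ᵀ) := by
    rw [cfMat_append, cfMat_append, cfMat_reverse, hC, Matrix.mul_assoc]
  have hN01 : cfMat (M ++ [a, b - 1, 1, a - 1] ++ M.reverse) 0 1 =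
      b * ((x00 + a * x01) * (x10 + a * x11)) - (x00 * x11 - x01 * x10) := by
    rw [hfullmat]
    simp [Matrix.mul_apply, Fin.sum_univ_two, Matrix.transpose_apply, Matrix.vecMul, dotProduct,
      ← hx00, ← hx01, ← hx10, ← hx11]
    ring
  have hN11 : cfMat (M ++ [a, b - 1, 1, a - 1] ++ M.reverse) 1 1 =
      b * (x10 + a * x11) ^ 2 := by
    rw [hfullmat]
    simp [Matrix.mul_apply, Fin.sum_univ_two, Matrix.transpose_apply, Matrix.vecMul, dotProduct,
      ← hx00, ← hx01, ← hx10, ← hx11]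
    ring
  -- coprimality and the denominator
  have hdetW : (x00 + a * x01) * (x10 + a * x11) * 0 +
      ((x00 + a * x01) * (x10 + a * x11)) = (x00 + a * x01) * (x10 + a * x11) := by ring
  have hdetMA : cfMat (M ++ [a]) 0 0 * cfMat (M ++ [a]) 1 1 -
      cfMat (M ++ [a]) 0 1 * cfMat (M ++ [a]) 1 0 = (-1) ^ (n + 1) := by
    have := cfMat_det (M ++ [a])
    rw [Matrix.det_fin_two] at this
    simpa [hn] using this
  have hcop : IsCoprime (cfMat (M ++ [a]) 0 1) (cfMat (M ++ [a]) 1 1) := by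
    refine ⟨-(-1 : ℤ) ^ (n + 1) * cfMat (M ++ [a]) 1 0,
      (-1 : ℤ) ^ (n + 1) * cfMat (M ++ [a]) 0 0, ?_⟩
    have hsq : ((-1 : ℤ) ^ (n + 1)) * ((-1 : ℤ) ^ (n + 1)) = 1 := by
      rw [← pow_add]
      exact Even.neg_one_pow ⟨n + 1, by ring⟩
    calc -(-1 : ℤ) ^ (n + 1) * cfMat (M ++ [a]) 1 0 * cfMat (M ++ [a]) 0 1 +
          (-1 : ℤ) ^ (n + 1) * cfMat (M ++ [a]) 0 0 * cfMat (M ++ [a]) 1 1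
        = (-1 : ℤ) ^ (n + 1) * (cfMat (M ++ [a]) 0 0 * cfMat (M ++ [a]) 1 1 -
            cfMat (M ++ [a]) 0 1 * cfMat (M ++ [a]) 1 0) := by ring
      _ = 1 := by rw [hdetMA, hsq]
  have hden : (((cfVal (M ++ [a])).den : ℤ)) = x10 + a * x11 := by
    rw [cfVal_eq (M ++ [a]) hMa, hD, hB]
    exact Rat.den_div_eq_of_coprime hDpos
      (by simpa [Int.isCoprime_iff_gcd_eq_one, Int.gcd_eq_natAbs_gcd_natAbs, Nat.Coprime, hB, hD] using hcop)
  -- put everything together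
  rw [show ((cfVal (M ++ [a])).den : ℚ) = ((((cfVal (M ++ [a])).den : ℤ)) : ℚ) by push_cast; ring,
    hden, cfVal_eq (M ++ [a]) hMa, cfVal_eq _ hfullpos, hB, hD, hN01, hN11, hdet]
  have hDQ : ((x10 : ℚ) + (a : ℚ) * x11) ≠ 0 := by
    have : ((0:ℚ)) < ((x10 + a * x11 : ℤ) : ℚ) := by exact_mod_cast hDpos
    push_cast at this
    linarith
  have hbQ : ((b : ℚ)) ≠ 0 := by positivity
  push_cast
  rw [pow_succ]
  field_simp
  ring
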